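/- Let Q be a quantity space over a scalar system K and let b₁, …, bₙ ∈ Q be invertible quantities such that (i) if bᵢ ~ bⱼ then i = j, (ii) for every q ∈ Q there exist integers k₁, …, kₙ with q ~ ∏ᵢ bᵢ^{kᵢ}, and (iii) if ∏ᵢ bᵢ^{kᵢ} ~ ∏ᵢ bᵢ^{kᵢ'} then kᵢ = kᵢ' for all i (i.e. [b₁], …, [bₙ] is a basis for Q/~). Then {b₁, …, bₙ} is a basis for Q: every q ∈ Q has a unique expansion q = μ • ∏ᵢ bᵢ^{kᵢ} with μ ∈ K and integers kᵢ. -/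

import Mathlib

/-- A *scalable (commutative) monoid* over a scalar system `K ⊆ F`:
`K` is a subset of the field `F` closed under addition, containing `1`,
closed under multiplication and under inverses of nonzero elements
(so the nonzero elements of `K` form a group under multiplication),
together with a scalar multiplication `smul` satisfying the axioms
`1 • q = q`, `α • (β • q) = (α β) • q` and `α • (q * q') = (α • q) * q'`
for scalars in `K`. -/
structure ScalableMonoid (F : Type*) [Field F] (Q : Type*) [CommMonoid Q] where
  K : Set F
  one_mem : (1 : F) ∈ K
  add_mem : ∀ {a b : F}, a ∈ K → b ∈ K → a + b ∈ K
  mul_mem : ∀ {a b : F}, a ∈ K → b ∈ K → a * b ∈ K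
  inv_mem : ∀ {a : F}, a ∈ K → a ≠ 0 → a⁻¹ ∈ K
  smul : F → Q → Q
  smul_one : ∀ q : Q, smul 1 q = q
  smul_smul : ∀ {a b : F}, a ∈ K → b ∈ K → ∀ q : Q, smul a (smul b q) = smul (a * b) q
  smul_mul : ∀ {a : F}, a ∈ K → ∀ q q' : Q, smul a (q * q') = smul a q * q'

/-- `b : Fin n → Qˣ` (a list of invertible quantities) is a basis for the scalable
monoid `M` if every quantity has a unique expansion `q = μ • ∏ i, b i ^ k i`
with `μ ∈ K` and integer exponents `k`. -/
def ScalableMonoid.IsBasis {F : Type*} [Field F] {Q : Type*} [CommMonoid Q]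
    (M : ScalableMonoid F Q) {n : ℕ} (b : Fin n → Qˣ) : Prop :=
  ∀ q : Q, ∃! p : M.K × (Fin n → ℤ),
    q = M.smul (p.1 : F) (↑(∏ i, b i ^ p.2 i) : Q)

/-- A quantity space is a scalable monoid having a (finite) basis. -/
def ScalableMonoid.IsQuantitySpace {F : Type*} [Field F] {Q : Type*} [CommMonoid Q]
    (M : ScalableMonoid F Q) : Prop :=
  ∃ (n : ℕ) (b : Fin n → Qˣ), M.IsBasis b

/-- The measure `μ_B(q)`: the unique scalar in the expansion of `q` relative to
the basis `B`. -/
noncomputable def ScalableMonoid.measure {F : Type*} [Field F] {Q : Type*} [CommMonoid Q]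
    (M : ScalableMonoid F Q) {n : ℕ} {b : Fin n → Qˣ} (hB : M.IsBasis b) (q : Q) : F :=
  ((hB q).choose.1 : F)

/-- Quantities `q, q'` are equidimensional (`q ~ q'`) if `α • q = β • q'`
for some scalars `α, β ∈ K`. -/
def ScalableMonoid.Equidim {F : Type*} [Field F] {Q : Type*} [CommMonoid Q]
    (M : ScalableMonoid F Q) (q q' : Q) : Prop :=
  ∃ α β : F, α ∈ M.K ∧ β ∈ M.K ∧ M.smul α q = M.smul β q'


namespace ScalableMonoid

variable {F : Type*} [Field F] {Q : Type*} [CommMonoid Q]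

lemma smul_mul_smul'' (M : ScalableMonoid F Q) {a c : F} (ha : a ∈ M.K) (hc : c ∈ M.K)
    (q q' : Q) : M.smul a q * M.smul c q' = M.smul (a * c) (q * q') := by
  calc M.smul a q * M.smul c q'
      = M.smul a (q * M.smul c q') := (M.smul_mul ha _ _).symm
    _ = M.smul a (M.smul c q' * q) := by rw [mul_comm]
    _ = M.smul a (M.smul c (q' * q)) := by rw [M.smul_mul hc]
    _ = M.smul (a * c) (q' * q) := M.smul_smul ha hc _
    _ = M.smul (a * c) (q * q') := by rw [mul_comm q' q]

end ScalableMonoid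

/-- conversely, if `Q` is a quantity space and the invertible
quantities `b₁, …, bₙ` satisfy (i) `bᵢ ~ bⱼ → i = j`, (ii) every `q` satisfies
`q ~ ∏ bᵢ^{kᵢ}` for some integers `kᵢ`, and (iii)
`∏ bᵢ^{kᵢ} ~ ∏ bᵢ^{kᵢ'} → k = k'` (i.e. `[b₁], …, [bₙ]` is a basis for `Q/~`),
then `b₁, …, bₙ` is a basis for `Q`. -/
theorem basis_of_classes_basis {F : Type*} [Field F] {Q : Type*} [CommMonoid Q]
    (M : ScalableMonoid F Q) (hQS : M.IsQuantitySpace)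
    {n : ℕ} (b : Fin n → Qˣ)
    (h1 : ∀ i j : Fin n, M.Equidim ↑(b i) ↑(b j) → i = j)
    (h2 : ∀ q : Q, ∃ k : Fin n → ℤ, M.Equidim q (↑(∏ i, b i ^ k i) : Q))
    (h3 : ∀ k k' : Fin n → ℤ,
      M.Equidim (↑(∏ i, b i ^ k i) : Q) (↑(∏ i, b i ^ k' i) : Q) → k = k') :
    M.IsBasis b := by
  obtain ⟨m, e, hE⟩ := hQS
  -- uniqueness of expansions w.r.t. the basis e
  have uniq : ∀ (q : Q) {μ ν : F}, μ ∈ M.K → ν ∈ M.K → ∀ (κ lam : Fin m → ℤ),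
      q = M.smul μ (↑(∏ i, e i ^ κ i) : Q) → q = M.smul ν (↑(∏ i, e i ^ lam i) : Q) →
      μ = ν ∧ κ = lam := by
    intro q μ ν hμ hν κ lam hq1 hq2
    have h := (hE q).unique (y₁ := (⟨μ, hμ⟩, κ)) (y₂ := (⟨ν, hν⟩, lam)) hq1 hq2
    exact ⟨congrArg (fun p => (p.1 : F)) h, congrArg Prod.snd h⟩
  -- for each unit u there is an expansion with nonzero scalar
  have unit_fact : ∀ u : Qˣ, ∃ ν : F, ∃ κ : Fin m → ℤ, ν ∈ M.K ∧ ν ≠ 0 ∧ ν⁻¹ ∈ M.K ∧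
      (u : Q) = M.smul ν (↑(∏ i, e i ^ κ i) : Q) ∧
      (↑(∏ i, e i ^ κ i) : Q) = M.smul ν⁻¹ (u : Q) := by
    intro u
    obtain ⟨⟨⟨ν, hν⟩, κ⟩, hu1, -⟩ := hE (u : Q)
    obtain ⟨⟨⟨ρ, hρ⟩, lam⟩, hu2, -⟩ := hE ((u⁻¹ : Qˣ) : Q)
    have hprod : (∏ i, e i ^ κ i) * (∏ i, e i ^ lam i) = ∏ i, e i ^ (κ i + lam i) := by
      rw [← Finset.prod_mul_distrib]
      exact Finset.prod_congr rfl fun i _ => (zpow_add (e i) (κ i) (lam i)).symm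
    have hone : (1 : Q) = M.smul (ν * ρ) (↑(∏ i, e i ^ (κ i + lam i)) : Q) := by
      have : (1 : Q) = (u : Q) * ((u⁻¹ : Qˣ) : Q) := by
        rw [← Units.val_mul, mul_inv_cancel, Units.val_one]
      rw [this, hu1, hu2, M.smul_mul_smul'' hν hρ, ← Units.val_mul, hprod]
    have hone' : (1 : Q) = M.smul 1 (↑(∏ i, e i ^ (fun _ : Fin m => (0:ℤ)) i) : Q) := by
      simp [M.smul_one]
    have hkey := uniq 1 (M.mul_mem hν hρ) M.one_mem _ _ hone hone'
    have hν0 : ν ≠ 0 := fun h => one_ne_zero (hkey.1.symm.trans (by rw [h, zero_mul]))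
    have hνinv : ν⁻¹ ∈ M.K := M.inv_mem hν hν0
    refine ⟨ν, κ, hν, hν0, hνinv, hu1, ?_⟩
    rw [hu1, M.smul_smul hνinv hν, inv_mul_cancel₀ hν0, M.smul_one]
  -- any two expansions w.r.t. b agree
  have anyTwo : ∀ (q : Q) (p p' : M.K × (Fin n → ℤ)),
      q = M.smul (p.1 : F) (↑(∏ i, b i ^ p.2 i) : Q) →
      q = M.smul (p'.1 : F) (↑(∏ i, b i ^ p'.2 i) : Q) → p = p' := by
    rintro q ⟨⟨μ, hμ⟩, k⟩ ⟨⟨μ', hμ'⟩, k'⟩ hp hp'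
    have hkk' : k = k' := h3 k k' ⟨μ, μ', hμ, hμ', hp.symm.trans hp'⟩
    subst hkk'
    obtain ⟨ν, κ, hν, hν0, hνinv, hu1, -⟩ := unit_fact (∏ i, b i ^ k i)
    have e1 : q = M.smul (μ * ν) (↑(∏ i, e i ^ κ i) : Q) := by
      rw [hp, hu1, M.smul_smul hμ hν]
    have e2 : q = M.smul (μ' * ν) (↑(∏ i, e i ^ κ i) : Q) := by
      rw [hp', hu1, M.smul_smul hμ' hν]
    have := (uniq q (M.mul_mem hμ hν) (M.mul_mem hμ' hν) _ _ e1 e2).1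
    have hμμ' : μ = μ' := by
      exact mul_right_cancel₀ hν0 this
    simp [hμμ']
  intro q
  obtain ⟨k, α, β, hα, hβ, heq⟩ := h2 q
  obtain ⟨⟨⟨μ, hμ⟩, κq⟩, hq, -⟩ := hE q
  obtain ⟨ν, κu, hν, hν0, hνinv, hu1, hu2⟩ := unit_fact (∏ i, b i ^ k i)
  have e1 : M.smul α q = M.smul (α * μ) (↑(∏ i, e i ^ κq i) : Q) := by
    rw [hq, M.smul_smul hα hμ]
  have e2 : M.smul α q = M.smul (β * ν) (↑(∏ i, e i ^ κu i) : Q) := by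
    rw [heq, hu1, M.smul_smul hβ hν]
  have hkey := uniq (M.smul α q) (M.mul_mem hα hμ) (M.mul_mem hβ hν) _ _ e1 e2
  have hqexp : q = M.smul (μ * ν⁻¹) (↑(∏ i, b i ^ k i) : Q) := by
    rw [hq, hkey.2, hu2, M.smul_smul hμ hνinv]
  exact ⟨(⟨μ * ν⁻¹, M.mul_mem hμ hνinv⟩, k), hqexp,
    fun p hp => anyTwo q p (⟨μ * ν⁻¹, M.mul_mem hμ hνinv⟩, k) hp hqexp⟩
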